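/- arXiv:1910.09385 — 2 statements merged into one kernel-verified Lean document; each statement's English description precedes it below -/
import Mathlib

section
/- Fix ε > 0 and suppose Assumption 2.1 holds. If the spectral radius satisfies r_σ(L^ε) ≤ 1, then A ≡ 0 is the unique solution in L¹(ℝ^N) with A ≥ 0 a.e. of the fixed-point equation A = T^ε(A). -/
open MeasureTheory Filter Topology ENNReal

noncomputable section
set_option synthInstance.maxHeartbeats 1000000
set_option maxHeartbeats 1000000



/-- Euclidean space `ℝ^N`. -/
abbrev Euc (N : ℕ) : Type := EuclideanSpace ℝ (Fin N)

/-- The rescaled mutation kernel `m_ε(x) = ε^{-N} m(x/ε)`. -/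
noncomputable def mScaled {N : ℕ} (m : Euc N → ℝ) (ε : ℝ) (x : Euc N) : ℝ :=
  (ε ^ N)⁻¹ * m (ε⁻¹ • x)

/-- The fitness function `Ψ(x) = β(x) r(x) / (δ (θ + d(x)))`. -/
noncomputable def fitness {N : ℕ} (δ θ : ℝ) (β r d : Euc N → ℝ) (x : Euc N) : ℝ :=
  β x * r x / (δ * (θ + d x))

/-- Pointwise formula for the linear operator `L_k^ε φ = (Λ ξ_k/θ) m_ε ⋆ (Ψ_k φ)`. -/
noncomputable def Lfun {N : ℕ} (Λ θ ξk : ℝ) (Ψk : Euc N → ℝ) (m : Euc N → ℝ)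
    (ε : ℝ) (φ : Euc N → ℝ) (x : Euc N) : ℝ :=
  (Λ * ξk / θ) * ∫ y, mScaled m ε (x - y) * (Ψk y * φ y)

/-- Pointwise formula for the nonlinear operator
`T^ε(φ) = Σ_k L_k^ε(φ) / (1 + θ⁻¹ ∫ β_k φ)`. -/
noncomputable def Tfun {N : ℕ} (Λ θ : ℝ) (ξ : Fin 2 → ℝ) (Ψ β : Fin 2 → Euc N → ℝ)
    (m : Euc N → ℝ) (ε : ℝ) (φ : Euc N → ℝ) (x : Euc N) : ℝ :=
  ∑ k : Fin 2, Lfun Λ θ (ξ k) (Ψ k) m ε φ x / (1 + θ⁻¹ * ∫ y, β k y * φ y)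

/-- Pointwise formula for the one-host nonlinear operator
`T_k^ε(φ) = L_k^ε(φ) / (1 + θ⁻¹ ∫ β_k φ)`. -/
noncomputable def Tkfun {N : ℕ} (Λ θ ξk : ℝ) (Ψk βk : Euc N → ℝ) (m : Euc N → ℝ)
    (ε : ℝ) (φ : Euc N → ℝ) (x : Euc N) : ℝ :=
  Lfun Λ θ ξk Ψk m ε φ x / (1 + θ⁻¹ * ∫ y, βk y * φ y)

/-- `q(ε) = o(ε^∞)` as `ε → 0⁺` : for every `n`, `ε^{-n} q(ε) → 0`. -/
def LittleOInfty (q : ℝ → ℝ) : Prop :=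
  ∀ n : ℕ, Tendsto (fun ε => q ε / ε ^ n) (𝓝[>] (0 : ℝ)) (𝓝 0)

/-- Assumption 2.1 of the paper. -/
structure Assumption1 {N : ℕ} (ξ : Fin 2 → ℝ) (Λ θ δ : ℝ)
    (β d r : Fin 2 → Euc N → ℝ) (m : Euc N → ℝ) : Prop where
  ξ_pos : ∀ k, 0 < ξ k
  ξ_sum : ξ 0 + ξ 1 = 1
  Λ_pos : 0 < Λ
  θ_pos : 0 < θ
  δ_pos : 0 < δ
  β_cont : ∀ k, Continuous (β k)
  β_nonneg : ∀ k x, 0 ≤ β k x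
  β_bdd : ∀ k, ∃ C, ∀ x, β k x ≤ C
  d_cont : ∀ k, Continuous (d k)
  d_nonneg : ∀ k x, 0 ≤ d k x
  d_bdd : ∀ k, ∃ C, ∀ x, d k x ≤ C
  r_cont : ∀ k, Continuous (r k)
  r_nonneg : ∀ k x, 0 ≤ r k x
  r_bdd : ∀ k, ∃ C, ∀ x, r k x ≤ C
  Ψ_ne : ∀ k, ∃ x, fitness δ θ (β k) (r k) (d k) x ≠ 0
  Ψ_lim : ∀ k, Tendsto (fitness δ θ (β k) (r k) (d k)) (cocompact (Euc N)) (𝓝 0)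
  m_int : Integrable m
  m_bdd : ∃ C, ∀ x, m x ≤ C
  m_pos : ∀ᵐ x, 0 < m x
  m_symm : ∀ᵐ x, m (-x) = m x
  m_mass : ∫ x, m x = 1
  m_sup_int : ∀ R > 0,
    Integrable (fun x => ⨆ y : Metric.closedBall (0 : Euc N) R, m (x + (y : Euc N)))

/-- Assumption 2.2 of the paper: fast decay of the kernel and separated compact supports. -/
structure Assumption2 {N : ℕ} (β : Fin 2 → Euc N → ℝ) (m : Euc N → ℝ) : Prop where
  m_decay : ∀ n : ℕ, Tendsto (fun x : Euc N => ‖x‖ ^ n * m x) (cocompact (Euc N)) (𝓝 0)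
  β_suppcompact : ∀ k, HasCompactSupport (β k)
  supp_sep : ∃ η > 0, ∀ x ∈ tsupport (β 0), ∀ y ∈ tsupport (β 1), η ≤ dist x y

/-- Assumption 2.3 of the paper (nonnegative real spectrum and spectral gap) for the
family of operators `Lop k ε` on `L¹(ℝ^N)`. -/
def Assumption3 {N : ℕ}
    (Lop : Fin 2 → ℝ →
      (Lp ℝ 1 (volume : Measure (Euc N)) →L[ℝ] Lp ℝ 1 (volume : Measure (Euc N)))) : Prop :=
  (∀ k : Fin 2, ∀ ε > (0 : ℝ), spectrum ℝ (Lop k ε) ⊆ Set.Ici (0 : ℝ) ∧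
      (spectralRadius ℝ (Lop k ε)).toReal ∈ spectrum ℝ (Lop k ε)) ∧
  (∀ k : Fin 2, ∃ n : ℕ,
    0 < Filter.liminf (fun ε : ℝ =>
      ((spectralRadius ℝ (Lop k ε)).toReal -
        sSup (spectrum ℝ (Lop k ε) \ {(spectralRadius ℝ (Lop k ε)).toReal})) / ε ^ n)
      (𝓝[>] (0 : ℝ)))

/-- `R_{0,k} = (ξ_k Λ/θ) ‖Ψ_k‖_{L^∞}`. -/
noncomputable def R0k {N : ℕ} (ξk Λ θ : ℝ) (Ψk : Euc N → ℝ) : ℝ :=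
  ξk * Λ / θ * ⨆ x, Ψk x

/-- `R₀ = (Λ/θ) ‖ξ₁Ψ₁ + ξ₂Ψ₂‖_{L^∞}`. -/
noncomputable def R0 {N : ℕ} (ξ : Fin 2 → ℝ) (Λ θ : ℝ) (Ψ : Fin 2 → Euc N → ℝ) : ℝ :=
  Λ / θ * ⨆ x, (ξ 0 * Ψ 0 x + ξ 1 * Ψ 1 x)

/-- `A` is a nontrivial nonnegative fixed point of `T^ε` in `L¹(ℝ^N)`. -/
def IsFixedPointAe {N : ℕ} (Λ θ : ℝ) (ξ : Fin 2 → ℝ) (Ψ β : Fin 2 → Euc N → ℝ)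
    (m : Euc N → ℝ) (ε : ℝ) (A : Euc N → ℝ) : Prop :=
  Integrable A ∧ (0 ≤ᵐ[volume] A) ∧ ¬ (A =ᵐ[volume] (0 : Euc N → ℝ)) ∧
    A =ᵐ[volume] Tfun Λ θ ξ Ψ β m ε A

/-- `φ` is the (a.e. positive, `L¹`-normalised) principal eigenfunction of `L_k^ε`,
associated with the eigenvalue `ρ`. -/
def IsPrincipalEigenfun {N : ℕ} (Λ θ ξk : ℝ) (Ψk : Euc N → ℝ) (m : Euc N → ℝ) (ε : ℝ)
    (ρ : ℝ) (φ : Euc N → ℝ) : Prop :=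
  Integrable φ ∧ (∀ᵐ x, 0 < φ x) ∧ (∫ x, |φ x|) = 1 ∧
    (∀ᵐ x, Lfun Λ θ ξk Ψk m ε φ x = ρ * φ x)

/-- `ν_k^ε = θ (r_σ(L_k^ε) − 1) / ∫ β_k φ_k^{ε,1}`. -/
noncomputable def nuk {N : ℕ} (θ : ℝ) (βk : Euc N → ℝ) (ρ : ℝ) (φ : Euc N → ℝ) : ℝ :=
  θ * (ρ - 1) / ∫ x, βk x * φ x

namespace S0
variable {N : ℕ}

abbrev EE (N : ℕ) := Lp ℝ 1 (volume : Measure (Euc N))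
abbrev BB (N : ℕ) := EE N →L[ℝ] EE N

def PosOp (T : BB N) : Prop := ∀ f : EE N, 0 ≤ f → 0 ≤ T f

lemma smul_nn (a : ℝ) (ha : 0 ≤ a) {f : EE N} (hf : 0 ≤ f) : 0 ≤ a • f := by
  rw [← Lp.coeFn_nonneg] at hf ⊢
  filter_upwards [hf, Lp.coeFn_smul a f] with x hx h2
  simp only [Pi.zero_apply] at hx ⊢
  rw [h2]
  simpa using mul_nonneg ha hx

lemma PosOp.mul {T U : BB N} (hT : PosOp T) (hU : PosOp U) : PosOp (T * U) :=
  fun f hf => hT _ (hU f hf)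

lemma PosOp.one : PosOp (1 : BB N) := fun f hf => by simpa using hf

lemma PosOp.pow {T : BB N} (hT : PosOp T) : ∀ n, PosOp (T ^ n)
  | 0 => by simpa [pow_zero] using PosOp.one
  | n+1 => by rw [pow_succ]; exact (PosOp.pow hT n).mul hT

lemma PosOp.smul {T : BB N} (hT : PosOp T) {a : ℝ} (ha : 0 ≤ a) : PosOp (a • T) := fun f hf => by
  rw [ContinuousLinearMap.smul_apply]; exact smul_nn a ha (hT f hf)

lemma PosOp.tsum {f : ℕ → BB N} (hs : Summable f) (h : ∀ n, PosOp (f n)) :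
    PosOp (∑' n, f n) := by
  intro g hg
  have h2 : (∑' n, f n) g = ∑' n, f n g := by
    simpa using (ContinuousLinearMap.apply ℝ (EE N) g).map_tsum hs
  rw [h2]
  exact tsum_nonneg (fun n => h n g hg)

end S0

namespace S0
variable {N : ℕ}

lemma inverse_eq {A R : BB N} (h : IsUnit A) (h1 : A * R = 1) : Ring.inverse A = R := by
  calc Ring.inverse A = Ring.inverse A * (A * R) := by rw [h1, mul_one]
  _ = (Ring.inverse A * A) * R := by rw [mul_assoc]
  _ = R := by rw [Ring.inverse_mul_cancel _ h, one_mul]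

lemma base_case {T : BB N} (hT : PosOp T) {lam : ℝ} (hlam : ‖T‖ < lam) :
    ∃ R : BB N, (lam • (1:BB N) - T) * R = 1 ∧ R * (lam • (1:BB N) - T) = 1 ∧ PosOp R := by
  have hlam0 : 0 < lam := lt_of_le_of_lt (norm_nonneg T) hlam
  set x : BB N := lam⁻¹ • T with hx
  have hxn : ‖x‖ < 1 := by
    have e : ‖x‖ = ‖lam⁻¹‖ * ‖T‖ := norm_smul lam⁻¹ T
    rw [e, norm_inv, Real.norm_of_nonneg hlam0.le, inv_mul_lt_one₀ hlam0]
    exact hlam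
  have hsum : Summable (fun n => x ^ n) := summable_geometric_of_norm_lt_one hxn
  have h1 : lam • ((1:BB N) - x) = lam • (1:BB N) - T := by
    rw [smul_sub, hx, smul_smul, mul_inv_cancel₀ hlam0.ne', one_smul]
  refine ⟨lam⁻¹ • ∑' n, x ^ n, ?_, ?_, ?_⟩
  · rw [← h1, smul_mul_assoc, mul_smul_comm, smul_smul, mul_inv_cancel₀ hlam0.ne', one_smul,
      mul_neg_geom_series _ hxn]
  · rw [← h1, smul_mul_assoc, mul_smul_comm, smul_smul, inv_mul_cancel₀ hlam0.ne', one_smul,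
      geom_series_mul_neg _ hxn]
  · refine PosOp.smul ?_ (inv_nonneg.2 hlam0.le)
    refine PosOp.tsum hsum (fun n => ?_)
    rw [hx, smul_pow]
    exact (hT.pow n).smul (by positivity)

lemma step_case {T : BB N} {lam mu : ℝ} {R : BB N}
    (h1 : (lam • (1:BB N) - T) * R = 1) (h2 : R * (lam • (1:BB N) - T) = 1)
    (hR : PosOp R) (hd : 0 ≤ lam - mu) (hsmall : (lam - mu) * ‖R‖ < 1) :
    ∃ R' : BB N, (mu • (1:BB N) - T) * R' = 1 ∧ R' * (mu • (1:BB N) - T) = 1 ∧ PosOp R' := by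
  set A : BB N := lam • (1:BB N) - T with hA
  set x : BB N := (lam - mu) • R with hx
  have hxn : ‖x‖ < 1 := by
    have e : ‖x‖ = ‖lam - mu‖ * ‖R‖ := norm_smul (lam - mu) R
    rwa [e, Real.norm_of_nonneg hd]
  have hsum : Summable (fun n => x ^ n) := summable_geometric_of_norm_lt_one hxn
  have e0 : A - (lam - mu) • (1:BB N) = mu • (1:BB N) - T := by
    have hmu : lam - (lam - mu) = mu := by ring
    rw [hA, sub_right_comm, ← sub_smul, hmu]
  have key : A * ((1:BB N) - x) = mu • (1:BB N) - T := by
    rw [mul_sub, mul_one, hx, mul_smul_comm, h1]; exact e0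
  have key2 : ((1:BB N) - x) * A = mu • (1:BB N) - T := by
    rw [sub_mul, one_mul, hx, smul_mul_assoc, h2]; exact e0
  have hcomm : R * ((1:BB N) - x) = ((1:BB N) - x) * R := by
    rw [mul_sub, sub_mul, mul_one, one_mul, hx, mul_smul_comm, smul_mul_assoc]
  refine ⟨(∑' n, x ^ n) * R, ?_, ?_, ?_⟩
  · calc (mu • (1:BB N) - T) * ((∑' n, x ^ n) * R)
        = (A * (((1:BB N) - x) * ∑' n, x ^ n)) * R := by
          rw [← key, mul_assoc, mul_assoc, mul_assoc]
    _ = A * R := by rw [mul_neg_geom_series _ hxn, mul_one]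
    _ = 1 := h1
  · calc (∑' n, x ^ n) * R * (mu • (1:BB N) - T)
        = (∑' n, x ^ n) * (R * (((1:BB N) - x) * A)) := by rw [← key2, mul_assoc]
    _ = (∑' n, x ^ n) * (((1:BB N) - x) * (R * A)) := by
          rw [← mul_assoc R, hcomm, mul_assoc]
    _ = (∑' n, x ^ n) * ((1:BB N) - x) := by rw [h2, mul_one]
    _ = 1 := geom_series_mul_neg _ hxn
  · rw [← hsum.tsum_mul_right]
    refine PosOp.tsum (hsum.mul_right R) (fun n => ?_)
    rw [hx, smul_pow, smul_mul_assoc]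
    exact ((hR.pow n).mul hR).smul (by positivity)

end S0

namespace S0
variable {N : ℕ}

lemma descent {T : BB N} (hT : PosOp T) {c : ℝ} (hc : 0 < c)
    (hU : ∀ lam : ℝ, c ≤ lam → IsUnit (lam • (1:BB N) - T)) :
    PosOp (Ring.inverse (c • (1:BB N) - T)) := by
  set M : ℝ := ‖T‖ + 1 + c with hM
  have hcM : c ≤ M := by
    have := norm_nonneg T; simp only [hM]; linarith
  have hTM : ‖T‖ < M := by simp only [hM]; linarith
  -- continuity of the resolvent on [c, M]
  have hcont : ContinuousOn (fun lam : ℝ => Ring.inverse (lam • (1:BB N) - T))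
      (Set.Icc c M) := by
    intro lam hlam
    have hu := hU lam hlam.1
    have h2 : ContinuousAt (fun lam : ℝ => lam • (1:BB N) - T) lam :=
      ((continuous_id.smul continuous_const).sub continuous_const).continuousAt
    have h3 : ContinuousAt Ring.inverse (lam • (1:BB N) - T) := by
      have := NormedRing.inverse_continuousAt hu.unit
      rwa [hu.unit_spec] at this
    have h4 := ContinuousAt.comp (x := lam)
      (g := Ring.inverse) (f := fun lam : ℝ => lam • (1:BB N) - T) h3 h2
    exact h4.continuousWithinAt
  obtain ⟨K0, hK0⟩ := isCompact_Icc.exists_bound_of_continuousOn hcont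
  set K : ℝ := max K0 0 + 1 with hK
  have hKpos : 0 < K := by positivity
  have hKb : ∀ lam ∈ Set.Icc c M, ‖Ring.inverse (lam • (1:BB N) - T)‖ < K := by
    intro lam hlam
    calc ‖Ring.inverse (lam • (1:BB N) - T)‖ ≤ K0 := hK0 lam hlam
    _ ≤ max K0 0 := le_max_left _ _
    _ < K := by simp only [hK]; linarith
  set n : ℕ := ⌈(M - c) * K⌉₊ + 1 with hn
  have hnpos : 0 < (n : ℝ) := by positivity
  set s : ℝ := (M - c) / n with hs
  have hs0 : 0 ≤ s := by
    have : 0 ≤ M - c := by linarith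
    positivity
  have hsK : s * K < 1 := by
    rw [hs, div_mul_eq_mul_div, div_lt_one hnpos]
    calc (M - c) * K ≤ (⌈(M - c) * K⌉₊ : ℝ) := Nat.le_ceil _
    _ < n := by rw [hn]; push_cast; linarith
  have hlast : M - (n : ℝ) * s = c := by
    rw [hs]; field_simp; ring
  have key : ∀ j : ℕ, j ≤ n → PosOp (Ring.inverse ((M - (j:ℝ) * s) • (1:BB N) - T)) ∧
      ((M - (j:ℝ) * s) • (1:BB N) - T) * Ring.inverse ((M - (j:ℝ) * s) • (1:BB N) - T) = 1 ∧
      Ring.inverse ((M - (j:ℝ) * s) • (1:BB N) - T) * ((M - (j:ℝ) * s) • (1:BB N) - T) = 1 := by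
    intro j hj
    induction j with
    | zero =>
      obtain ⟨R, h1, h2, h3⟩ := base_case hT hTM
      have hu : IsUnit (M • (1:BB N) - T) := hU M hcM
      have he : Ring.inverse (M • (1:BB N) - T) = R := inverse_eq hu h1
      simp only [Nat.cast_zero, zero_mul, sub_zero]
      exact ⟨by rw [he]; exact h3, by rw [he]; exact h1, by rw [he]; exact h2⟩
    | succ j ih =>
      have hj' : j ≤ n := Nat.le_of_succ_le hj
      obtain ⟨ihpos, ih1, ih2⟩ := ih hj'
      set lam : ℝ := M - (j:ℝ) * s with hlam
      set mu : ℝ := M - ((j:ℕ)+1 : ℝ) * s with hmu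
      have hjs : (j : ℝ) * s ≤ (n : ℝ) * s := by
        apply mul_le_mul_of_nonneg_right _ hs0
        exact_mod_cast hj'
      have hjs' : ((j:ℝ)+1) * s ≤ (n : ℝ) * s := by
        apply mul_le_mul_of_nonneg_right _ hs0
        have : (j:ℝ) + 1 ≤ n := by exact_mod_cast hj
        exact this
      have hlamIcc : lam ∈ Set.Icc c M := by
        constructor
        · rw [hlam, ← hlast]; linarith
        · rw [hlam]
          have : 0 ≤ (j:ℝ) * s := by positivity
          linarith
      have hmuc : c ≤ mu := by rw [hmu, ← hlast]; linarith
      have hd : 0 ≤ lam - mu := by rw [hlam, hmu]; ring_nf; positivity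
      have hsmall : (lam - mu) * ‖Ring.inverse (lam • (1:BB N) - T)‖ < 1 := by
        have he : lam - mu = s := by rw [hlam, hmu]; ring
        rw [he]
        calc s * ‖Ring.inverse (lam • (1:BB N) - T)‖ ≤ s * K := by
              apply mul_le_mul_of_nonneg_left (hKb lam hlamIcc).le hs0
        _ < 1 := hsK
      obtain ⟨R', h1, h2, h3⟩ := step_case ih1 ih2 ihpos hd hsmall
      have hu : IsUnit (mu • (1:BB N) - T) := hU mu hmuc
      have he : Ring.inverse (mu • (1:BB N) - T) = R' := inverse_eq hu h1
      have hcast : M - ((j+1 : ℕ) : ℝ) * s = mu := by rw [hmu]; push_cast; ring_nf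
      rw [hcast]
      exact ⟨by rw [he]; exact h3, by rw [he]; exact h1, by rw [he]; exact h2⟩
  have := (key n le_rfl).1
  rwa [hlast] at this

end S0

namespace S0
variable {N : ℕ}

lemma ae_ker_nonneg {m : Euc N → ℝ} (hm : ∀ᵐ x, 0 < m x) {ε : ℝ} (hε : 0 < ε) (x : Euc N) :
    ∀ᵐ y, 0 ≤ mScaled m ε (x - y) := by
  have h1 : Measure.QuasiMeasurePreserving (fun y : Euc N => x - y) volume volume :=
    (Measure.measurePreserving_sub_left volume x).quasiMeasurePreserving
  have h2 : Measure.QuasiMeasurePreserving (fun z : Euc N => ε⁻¹ • z) volume volume :=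
    Measure.quasiMeasurePreserving_smul volume (inv_ne_zero hε.ne')
  have h3 := (h2.comp h1).ae hm
  filter_upwards [h3] with y hy
  have h4 : (0:ℝ) ≤ (ε ^ N)⁻¹ := by positivity
  have h5 : (0:ℝ) ≤ m (ε⁻¹ • (x - y)) := le_of_lt hy
  exact mul_nonneg h4 h5

lemma Lfun_nonneg {m φ Ψk : Euc N → ℝ} (hm : ∀ᵐ x, 0 < m x) {ε : ℝ} (hε : 0 < ε)
    (hΨ : ∀ y, 0 ≤ Ψk y) (hφ : 0 ≤ᵐ[(volume : Measure (Euc N))] φ) {Λ θ ξk : ℝ}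
    (hc : 0 ≤ Λ * ξk / θ) (x : Euc N) : 0 ≤ Lfun Λ θ ξk Ψk m ε φ x := by
  unfold Lfun
  refine mul_nonneg hc (integral_nonneg_of_ae ?_)
  filter_upwards [ae_ker_nonneg hm hε x, hφ] with y hy1 hy2
  exact mul_nonneg hy1 (mul_nonneg (hΨ y) hy2)

lemma Lfun_congr {m φ ψ Ψk : Euc N → ℝ} (h : φ =ᵐ[(volume : Measure (Euc N))] ψ)
    (Λ θ ξk ε : ℝ) (x : Euc N) :
    Lfun Λ θ ξk Ψk m ε φ x = Lfun Λ θ ξk Ψk m ε ψ x := by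
  unfold Lfun
  congr 1
  refine integral_congr_ae ?_
  filter_upwards [h] with y hy
  rw [hy]

end S0

/-- Theorem 2.2 (i).  Fix `ε > 0` and suppose Assumption 2.1 holds.
If the spectral radius of `L^ε = L₁^ε + L₂^ε` satisfies `r_σ(L^ε) ≤ 1`, then `A ≡ 0` is
the unique nonnegative solution in `L¹(ℝ^N)` of the fixed point equation `A = T^ε(A)`. -/
theorem statement0 {N : ℕ} (hN : 1 ≤ N) (ξ : Fin 2 → ℝ) (Λ θ δ : ℝ)
    (β d r : Fin 2 → Euc N → ℝ) (m : Euc N → ℝ)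
    (h1 : Assumption1 ξ Λ θ δ β d r m)
    (Ψ : Fin 2 → Euc N → ℝ) (hΨ : ∀ k, Ψ k = fitness δ θ (β k) (r k) (d k))
    (ε : ℝ) (hε : 0 < ε)
    (Lop : Lp ℝ 1 (volume : Measure (Euc N)) →L[ℝ] Lp ℝ 1 (volume : Measure (Euc N)))
    (hLop : ∀ φ : Lp ℝ 1 (volume : Measure (Euc N)),
      (Lop φ : Euc N → ℝ) =ᵐ[volume]
        fun x => Lfun Λ θ (ξ 0) (Ψ 0) m ε (⇑φ) x + Lfun Λ θ (ξ 1) (Ψ 1) m ε (⇑φ) x)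
    (hr : spectralRadius ℝ Lop ≤ 1)
    (A : Euc N → ℝ) (hAint : Integrable A) (hAnn : 0 ≤ᵐ[volume] A)
    (hfix : A =ᵐ[volume] Tfun Λ θ ξ Ψ β m ε A) :
    A =ᵐ[volume] (0 : Euc N → ℝ) := by
  have hθ := h1.θ_pos
  have hδ := h1.δ_pos
  have hΛ := h1.Λ_pos
  have hΨnn : ∀ (k : Fin 2) (x : Euc N), 0 ≤ Ψ k x := by
    intro k x
    rw [hΨ k]
    unfold fitness
    have hd := h1.d_nonneg k x
    exact div_nonneg (mul_nonneg (h1.β_nonneg k x) (h1.r_nonneg k x))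
      (mul_nonneg hδ.le (by linarith))
  have hcnn : ∀ k : Fin 2, 0 ≤ Λ * ξ k / θ := fun k =>
    div_nonneg (mul_nonneg hΛ.le (h1.ξ_pos k).le) hθ.le
  have hβAnn : ∀ k : Fin 2, 0 ≤ᵐ[(volume : Measure (Euc N))] fun y => β k y * A y := by
    intro k; filter_upwards [hAnn] with y hy
    exact mul_nonneg (h1.β_nonneg k y) hy
  have hβAint : ∀ k : Fin 2, Integrable (fun y => β k y * A y) := by
    intro k
    obtain ⟨C, hC⟩ := h1.β_bdd k
    refine hAint.bdd_mul (h1.β_cont k).aestronglyMeasurable (c := C) (Filter.Eventually.of_forall fun y => ?_)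
    rw [Real.norm_of_nonneg (h1.β_nonneg k y)]; exact hC y
  have hInn : ∀ k : Fin 2, 0 ≤ ∫ y, β k y * A y := fun k => integral_nonneg_of_ae (hβAnn k)
  have hzero : ∀ k : Fin 2, (∫ y, β k y * A y) = 0 →
      ∀ x, Lfun Λ θ (ξ k) (Ψ k) m ε A x = 0 := by
    intro k hk x
    have hβA0 : (fun y => β k y * A y) =ᵐ[(volume : Measure (Euc N))] 0 :=
      (integral_eq_zero_iff_of_nonneg_ae (hβAnn k) (hβAint k)).1 hk
    have hint0 : (fun y => mScaled m ε (x - y) * (Ψ k y * A y)) =ᵐ[(volume : Measure (Euc N))]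
        (fun _ => (0:ℝ)) := by
      filter_upwards [hβA0] with y hy
      have hy' : β k y * A y = 0 := hy
      have he : Ψ k y * A y = (β k y * A y) * (r k y / (δ * (θ + d k y))) := by
        rw [hΨ k]; unfold fitness; ring
      rw [he, hy', zero_mul, mul_zero]
    unfold Lfun
    rw [integral_congr_ae hint0, integral_zero, mul_zero]
  by_cases hall : (∫ y, β 0 y * A y) = 0 ∧ (∫ y, β 1 y * A y) = 0
  · refine hfix.trans (Filter.Eventually.of_forall fun x => ?_)
    unfold Tfun
    rw [Fin.sum_univ_two, hzero 0 hall.1 x, hzero 1 hall.2 x]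
    simp
  · have hex : ∃ c : ℝ, 1 < c ∧ ∀ k : Fin 2, (∫ y, β k y * A y) = 0 ∨
        c ≤ 1 + θ⁻¹ * ∫ y, β k y * A y := by
      have hθi : 0 < θ⁻¹ := inv_pos.2 hθ
      rcases (hInn 0).eq_or_lt with h0 | h0
      · have h1' : 0 < ∫ y, β 1 y * A y := by
          rcases (hInn 1).eq_or_lt with h1' | h1'
          · exact absurd ⟨h0.symm, h1'.symm⟩ hall
          · exact h1'
        refine ⟨1 + θ⁻¹ * ∫ y, β 1 y * A y, by nlinarith, fun k => ?_⟩
        fin_cases k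
        · exact Or.inl h0.symm
        · exact Or.inr le_rfl
      · rcases (hInn 1).eq_or_lt with h1' | h1'
        · refine ⟨1 + θ⁻¹ * ∫ y, β 0 y * A y, by nlinarith, fun k => ?_⟩
          fin_cases k
          · exact Or.inr le_rfl
          · exact Or.inl h1'.symm
        · have hA0 : 1 + θ⁻¹ * min (∫ y, β 0 y * A y) (∫ y, β 1 y * A y)
              ≤ 1 + θ⁻¹ * ∫ y, β 0 y * A y := by
            have := min_le_left (∫ y, β 0 y * A y) (∫ y, β 1 y * A y)
            nlinarith
          have hA1 : 1 + θ⁻¹ * min (∫ y, β 0 y * A y) (∫ y, β 1 y * A y)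
              ≤ 1 + θ⁻¹ * ∫ y, β 1 y * A y := by
            have := min_le_right (∫ y, β 0 y * A y) (∫ y, β 1 y * A y)
            nlinarith
          refine ⟨1 + θ⁻¹ * min (∫ y, β 0 y * A y) (∫ y, β 1 y * A y), ?_, fun k => ?_⟩
          · have := lt_min h0 h1'
            nlinarith
          · fin_cases k
            · exact Or.inr hA0
            · exact Or.inr hA1
    obtain ⟨c, hc1, hck⟩ := hex
    have hc0 : (0:ℝ) < c := lt_trans one_pos hc1
    have hterm : ∀ (k : Fin 2) (x : Euc N),
        c * (Lfun Λ θ (ξ k) (Ψ k) m ε A x / (1 + θ⁻¹ * ∫ y, β k y * A y)) ≤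
        Lfun Λ θ (ξ k) (Ψ k) m ε A x := by
      intro k x
      rcases hck k with h | h
      · rw [hzero k h x]; simp
      · have hLnn := S0.Lfun_nonneg h1.m_pos hε (hΨnn k) hAnn (hcnn k) x
        have hden : (0:ℝ) < 1 + θ⁻¹ * ∫ y, β k y * A y := lt_of_lt_of_le hc0 h
        calc c * (Lfun Λ θ (ξ k) (Ψ k) m ε A x / (1 + θ⁻¹ * ∫ y, β k y * A y))
            ≤ (1 + θ⁻¹ * ∫ y, β k y * A y) *
              (Lfun Λ θ (ξ k) (Ψ k) m ε A x / (1 + θ⁻¹ * ∫ y, β k y * A y)) :=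
              mul_le_mul_of_nonneg_right h (div_nonneg hLnn hden.le)
        _ = Lfun Λ θ (ξ k) (Ψ k) m ε A x := by
              rw [mul_comm, div_mul_cancel₀ _ hden.ne']
    have hmain : ∀ᵐ x ∂(volume : Measure (Euc N)), c * A x ≤
        Lfun Λ θ (ξ 0) (Ψ 0) m ε A x + Lfun Λ θ (ξ 1) (Ψ 1) m ε A x := by
      filter_upwards [hfix] with x hx
      calc c * A x = c * Tfun Λ θ ξ Ψ β m ε A x := by rw [← hx]
      _ = c * (Lfun Λ θ (ξ 0) (Ψ 0) m ε A x / (1 + θ⁻¹ * ∫ y, β 0 y * A y)) +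
          c * (Lfun Λ θ (ξ 1) (Ψ 1) m ε A x / (1 + θ⁻¹ * ∫ y, β 1 y * A y)) := by
          unfold Tfun; rw [Fin.sum_univ_two, mul_add]
      _ ≤ _ := add_le_add (hterm 0 x) (hterm 1 x)
    -- move to L¹
    set Alp : Lp ℝ 1 (volume : Measure (Euc N)) := hAint.toL1 A with hAlp
    have hAe : ⇑Alp =ᵐ[(volume : Measure (Euc N))] A := hAint.coeFn_toL1
    have hLpos : S0.PosOp Lop := by
      intro f hf
      rw [← Lp.coeFn_nonneg] at hf ⊢
      filter_upwards [hLop f] with x hx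
      simp only [Pi.zero_apply]
      rw [hx]
      exact add_nonneg (S0.Lfun_nonneg h1.m_pos hε (hΨnn 0) hf (hcnn 0) x)
        (S0.Lfun_nonneg h1.m_pos hε (hΨnn 1) hf (hcnn 1) x)
    have hunits : ∀ lam : ℝ, c ≤ lam →
        IsUnit (lam • (1 : S0.BB N) - Lop) := by
      intro lam hlam
      have hlam1 : (1:ℝ) < lam := lt_of_lt_of_le hc1 hlam
      have hmem : lam ∈ resolventSet ℝ Lop := by
        refine spectrum.mem_resolventSet_of_spectralRadius_lt (lt_of_le_of_lt hr ?_)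
        rw [← ENNReal.coe_one, ENNReal.coe_lt_coe, ← NNReal.coe_lt_coe]
        simpa [Real.norm_eq_abs] using lt_of_lt_of_le hlam1 (le_abs_self lam)
      have : IsUnit (algebraMap ℝ (S0.BB N) lam - Lop) := hmem
      rwa [Algebra.algebraMap_eq_smul_one] at this
    have hRpos := S0.descent hLpos hc0 hunits
    have hu : IsUnit (c • (1 : S0.BB N) - Lop) := hunits c le_rfl
    have hLeq : ∀ (k : Fin 2) (x : Euc N),
        Lfun Λ θ (ξ k) (Ψ k) m ε (⇑Alp) x = Lfun Λ θ (ξ k) (Ψ k) m ε A x :=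
      fun k x => S0.Lfun_congr hAe _ _ _ _ x
    have hSle : (c • (1 : S0.BB N) - Lop) Alp ≤ 0 := by
      rw [← Lp.coeFn_le]
      have happ : (c • (1 : S0.BB N) - Lop) Alp = c • Alp - Lop Alp := by
        simp [ContinuousLinearMap.sub_apply, ContinuousLinearMap.smul_apply,
          ContinuousLinearMap.one_apply]
      rw [happ]
      filter_upwards [Lp.coeFn_sub (c • Alp) (Lop Alp), Lp.coeFn_smul c Alp, hLop Alp,
        hAe, hmain, Lp.coeFn_zero ℝ 1 (volume : Measure (Euc N))] with x e1 e2 e3 e4 e5 e6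
      rw [e6, e1]
      simp only [Pi.sub_apply, Pi.zero_apply]
      rw [e2]
      simp only [Pi.smul_apply, smul_eq_mul]
      rw [e3, hLeq 0 x, hLeq 1 x, e4]
      linarith
    have hAle : Alp ≤ 0 := by
      have h01 : (0 : Lp ℝ 1 (volume : Measure (Euc N))) ≤ -((c • (1 : S0.BB N) - Lop) Alp) := by
        rwa [le_neg, neg_zero]
      have h02 := hRpos _ h01
      rw [map_neg] at h02
      have h04 : (Ring.inverse (c • (1 : S0.BB N) - Lop)) ((c • (1 : S0.BB N) - Lop) Alp)
          = Alp := by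
        have hid : Ring.inverse (c • (1 : S0.BB N) - Lop) * (c • (1 : S0.BB N) - Lop) = 1 :=
          Ring.inverse_mul_cancel _ hu
        calc (Ring.inverse (c • (1 : S0.BB N) - Lop)) ((c • (1 : S0.BB N) - Lop) Alp)
            = (Ring.inverse (c • (1 : S0.BB N) - Lop) * (c • (1 : S0.BB N) - Lop)) Alp := rfl
        _ = Alp := by rw [hid]; rfl
      rw [h04] at h02
      exact neg_nonneg.1 h02
    have hAge : (0 : Lp ℝ 1 (volume : Measure (Euc N))) ≤ Alp := by
      rw [← Lp.coeFn_nonneg]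
      filter_upwards [hAnn, hAe] with x hx he
      simp only [Pi.zero_apply]
      rw [he]
      exact hx
    have hA0 : Alp = 0 := le_antisymm hAle hAge
    calc A =ᵐ[(volume : Measure (Euc N))] ⇑Alp := hAe.symm
    _ =ᵐ[(volume : Measure (Euc N))] (0 : Euc N → ℝ) := by
        rw [hA0]; exact Lp.coeFn_zero ℝ 1 (volume : Measure (Euc N))
end
end

section
/- Suppose Assumptions 2.1 and 2.2 hold. For each pair (k,l) ∈ {1,2}² with k ≠ l and each p ∈ [1,∞), there exists a function η : (0,∞) → [0,∞) with η(ε) = o(ε^∞) as ε → 0 such that for every A ∈ L¹(ℝ^N) with A ≥ 0 a.e. and every small ε > 0, ‖χ_{Σ_k} · (m_ε ⋆ (Ψ_l A))‖_{L^p(ℝ^N)} ≤ η(ε) ‖A‖_{L¹(Ω_l)}. -/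
open MeasureTheory Filter Topology ENNReal

noncomputable section

/-- Lemma 4.2 (b).  Under Assumptions 2.1 and 2.2, for `k ≠ l` and
`p ∈ [1,∞)`, there is an `o(ε^∞)` function `η`, independent of `A`, such that
`‖χ_{Σ_k} (m_ε ⋆ (Ψ_l A))‖_{L^p} ≤ η(ε) ‖A‖_{L¹(Ω_l)}` for every nonnegative `A ∈ L¹` and
every small `ε > 0`. -/
theorem statement11 {N : ℕ} (hN : 1 ≤ N) (ξ : Fin 2 → ℝ) (Λ θ δ : ℝ)
    (β d r : Fin 2 → Euc N → ℝ) (m : Euc N → ℝ)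
    (h1 : Assumption1 ξ Λ θ δ β d r m)
    (Ψ : Fin 2 → Euc N → ℝ) (hΨ : ∀ k, Ψ k = fitness δ θ (β k) (r k) (d k))
    (h2 : Assumption2 β m)
    (k l : Fin 2) (hkl : k ≠ l) (p : ℝ) (hp : 1 ≤ p) :
    ∃ η : ℝ → ℝ, (∀ ε, 0 ≤ η ε) ∧ LittleOInfty η ∧
      ∃ ε₀ > (0 : ℝ), ∀ ε ∈ Set.Ioc (0 : ℝ) ε₀,
        ∀ A : Euc N → ℝ, Integrable A → (0 ≤ᵐ[volume] A) →
          eLpNorm (Set.indicator (tsupport (β k))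
              (fun x => ∫ y, mScaled m ε (x - y) * (Ψ l y * A y)))
            (ENNReal.ofReal p) volume ≤
          ENNReal.ofReal (η ε * ∫ x in {z : Euc N | 0 < Ψ l z}, A x) := by
  classical
  obtain ⟨η₀, hη₀, hsep⟩ := h2.supp_sep
  have hsep' : ∀ x ∈ tsupport (β k), ∀ y ∈ tsupport (β l), η₀ ≤ dist x y := by
    fin_cases k <;> fin_cases l <;>
      first
        | exact absurd rfl hkl
        | exact hsep
        | exact fun x hx y hy => by rw [dist_comm]; exact hsep y hy x hx
  obtain ⟨Cβ, hCβ⟩ := h1.β_bdd l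
  obtain ⟨Cr, hCr⟩ := h1.r_bdd l
  have hθ := h1.θ_pos
  have hδ := h1.δ_pos
  set CΨ : ℝ := Cβ * Cr / (δ * θ) with hCΨdef
  have hΨnn : ∀ y, 0 ≤ Ψ l y := by
    intro y
    rw [hΨ]
    unfold fitness
    have hd := h1.d_nonneg l y
    exact div_nonneg (mul_nonneg (h1.β_nonneg l y) (h1.r_nonneg l y))
      (mul_nonneg hδ.le (by linarith))
  have hCβ0 : 0 ≤ Cβ := (h1.β_nonneg l 0).trans (hCβ 0)
  have hCr0 : 0 ≤ Cr := (h1.r_nonneg l 0).trans (hCr 0)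
  have hΨle : ∀ y, Ψ l y ≤ CΨ := by
    intro y
    rw [hΨ]
    unfold fitness
    have hd := h1.d_nonneg l y
    have hnum : β l y * r l y ≤ Cβ * Cr :=
      mul_le_mul (hCβ y) (hCr y) (h1.r_nonneg l y) hCβ0
    have hden : δ * θ ≤ δ * (θ + d l y) := by nlinarith
    exact div_le_div₀ (mul_nonneg hCβ0 hCr0) hnum (by positivity) hden
  have hCΨ0 : 0 ≤ CΨ := (hΨnn 0).trans (hΨle 0)
  -- Ψ l is continuous, Ω_l is open
  have hΨcont : Continuous (Ψ l) := by
    rw [hΨ]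
    unfold fitness
    exact ((h1.β_cont l).mul (h1.r_cont l)).div
      (continuous_const.mul (continuous_const.add (h1.d_cont l)))
      (fun x => by have := h1.d_nonneg l x; positivity)
  have hΩopen : IsOpen {z : Euc N | 0 < Ψ l z} := isOpen_lt continuous_const hΨcont
  -- the far supremum of |m|
  set S : ℝ → ℝ := fun ε => ⨆ z : {z : Euc N // η₀ / ε ≤ ‖z‖}, |m (z : Euc N)| with hSdef
  -- volume factor
  set μs : ℝ≥0∞ := volume (tsupport (β k)) with hμsdef
  have hμs : μs ≠ ⊤ := ((h2.β_suppcompact k).isCompact.measure_lt_top).ne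
  have hμsp : μs ^ (1 / p) ≠ ⊤ := ENNReal.rpow_ne_top_of_nonneg (by positivity) hμs
  set V : ℝ := (μs ^ (1 / p)).toReal with hVdef
  have hV : 0 ≤ V := ENNReal.toReal_nonneg
  -- decay of m outside large balls
  have key : ∀ q : ℕ, ∃ R : ℝ, 1 ≤ R ∧ ∀ z : Euc N, R < ‖z‖ → ‖z‖ ^ q * |m z| ≤ 1 := by
    intro q
    have h := Metric.tendsto_nhds.mp (h2.m_decay q) 1 one_pos
    obtain ⟨K, hK, hKsub⟩ := Filter.mem_cocompact.mp h
    obtain ⟨R, hR⟩ := hK.isBounded.subset_closedBall 0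
    refine ⟨max R 1, le_max_right _ _, fun z hz => ?_⟩
    have hzK : z ∉ K := by
      intro hzK
      have := hR hzK
      rw [Metric.mem_closedBall, dist_zero_right] at this
      have := le_max_left R 1
      linarith
    have := hKsub hzK
    simp only [Set.mem_setOf_eq, Real.dist_eq, sub_zero] at this
    rw [abs_mul, abs_of_nonneg (by positivity : (0:ℝ) ≤ ‖z‖ ^ q)] at this
    linarith
  refine ⟨fun ε => (|ε| ^ N)⁻¹ * max (S ε) 0 * CΨ * V, ?_, ?_, ?_⟩
  · intro ε
    have h0 : 0 ≤ max (S ε) 0 := le_max_right _ _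
    have h1' : (0:ℝ) ≤ (|ε| ^ N)⁻¹ := by positivity
    positivity
  · -- LittleOInfty
    intro n
    obtain ⟨Rq, hRq1, hRqm⟩ := key (N + n + 1)
    set C'' : ℝ := CΨ * V / η₀ ^ (N + n + 1) with hC''def
    have hb : (0:ℝ) < η₀ / (2 * Rq) := by positivity
    apply squeeze_zero' (g := fun ε => C'' * ε)
    · filter_upwards [self_mem_nhdsWithin] with ε hε
      have hεpos : (0:ℝ) < ε := hε
      have h0 : 0 ≤ max (S ε) 0 := le_max_right _ _
      have h1' : (0:ℝ) ≤ (|ε| ^ N)⁻¹ := by positivity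
      have : (0:ℝ) ≤ (|ε| ^ N)⁻¹ * max (S ε) 0 * CΨ * V := by positivity
      positivity
    · filter_upwards [Ioo_mem_nhdsGT_of_mem (Set.left_mem_Ico.mpr hb)] with ε hε
      obtain ⟨hεpos, hεlt⟩ := hε
      have hfar : ∀ z : Euc N, η₀ / ε ≤ ‖z‖ → Rq < ‖z‖ := by
        intro z hz
        have h2Rq : 2 * Rq ≤ η₀ / ε := by
          rw [le_div_iff₀ hεpos]
          have := hεlt.le
          rw [lt_div_iff₀ (by positivity : (0:ℝ) < 2 * Rq)] at hεlt
          linarith [mul_comm ε (2 * Rq)]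
        linarith
      have hSb : S ε ≤ (ε / η₀) ^ (N + n + 1) := by
        apply Real.iSup_le _ (by positivity)
        rintro ⟨z, hz⟩
        have hRz := hRqm z (hfar z hz)
        have hz0 : (0:ℝ) < η₀ / ε := by positivity
        have h2' : (η₀ / ε) ^ (N + n + 1) ≤ ‖z‖ ^ (N + n + 1) :=
          pow_le_pow_left₀ hz0.le hz _
        have h3' : (η₀ / ε) ^ (N + n + 1) * |m z| ≤ 1 :=
          le_trans (mul_le_mul_of_nonneg_right h2' (abs_nonneg _)) hRz
        have h4' : |m z| ≤ 1 / (η₀ / ε) ^ (N + n + 1) := by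
          rw [le_div_iff₀ (by positivity)]
          linarith [mul_comm ((η₀ / ε) ^ (N + n + 1)) (|m z|)]
        calc |m z| ≤ 1 / (η₀ / ε) ^ (N + n + 1) := h4'
          _ = (ε / η₀) ^ (N + n + 1) := by
              rw [one_div, ← inv_pow, inv_div]
      have hmaxb : max (S ε) 0 ≤ (ε / η₀) ^ (N + n + 1) :=
        max_le hSb (by positivity)
      have habs : |ε| = ε := abs_of_pos hεpos
      calc (|ε| ^ N)⁻¹ * max (S ε) 0 * CΨ * V / ε ^ n
          ≤ (|ε| ^ N)⁻¹ * ((ε / η₀) ^ (N + n + 1)) * CΨ * V / ε ^ n := by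
            gcongr
        _ = C'' * ε := by
            rw [habs, hC''def, div_pow]
            field_simp
            ring
    · have h : Filter.Tendsto (fun ε : ℝ => C'' * ε) (𝓝 0) (𝓝 (C'' * 0)) :=
        (continuous_const.mul continuous_id).tendsto 0
      rw [mul_zero] at h
      exact h.mono_left nhdsWithin_le_nhds
  · -- main bound
    obtain ⟨R0', hR01, hR0m⟩ := key 0
    refine ⟨η₀ / (2 * R0'), by positivity, ?_⟩
    rintro ε ⟨hεpos, hεle⟩ A hA hA0
    have hfar : ∀ z : Euc N, η₀ / ε ≤ ‖z‖ → R0' < ‖z‖ := by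
      intro z hz
      have h2R : 2 * R0' ≤ η₀ / ε := by
        rw [le_div_iff₀ hεpos]
        rw [le_div_iff₀ (by positivity : (0:ℝ) < 2 * R0')] at hεle
        linarith [mul_comm ε (2 * R0')]
      linarith
    have hbdd : BddAbove (Set.range fun z : {z : Euc N // η₀ / ε ≤ ‖z‖} => |m (z : Euc N)|) := by
      refine ⟨1, ?_⟩
      rintro _ ⟨z, rfl⟩
      have := hR0m z.1 (hfar z.1 z.2)
      simpa using this
    have hS0 : 0 ≤ max (S ε) 0 := le_max_right _ _
    set c₀ : ℝ := (ε ^ N)⁻¹ * max (S ε) 0 * CΨ with hc₀def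
    have hc₀ : 0 ≤ c₀ := by positivity
    set IA : ℝ := ∫ x in {z : Euc N | 0 < Ψ l z}, A x with hIAdef
    have hIA : 0 ≤ IA := integral_nonneg_of_ae (ae_restrict_of_ae hA0)
    have hptwise : ∀ x ∈ tsupport (β k),
        ‖∫ y, mScaled m ε (x - y) * (Ψ l y * A y)‖ ≤ c₀ * IA := by
      intro x hx
      have hg_int : Integrable (fun y => c₀ * Set.indicator {z : Euc N | 0 < Ψ l z} A y) :=
        ((hA.indicator hΩopen.measurableSet).const_mul c₀)
      have hbound : ∀ᵐ y, ‖mScaled m ε (x - y) * (Ψ l y * A y)‖ ≤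
          c₀ * Set.indicator {z : Euc N | 0 < Ψ l z} A y := by
        filter_upwards [hA0] with y hAy
        have hind0 : 0 ≤ Set.indicator {z : Euc N | 0 < Ψ l z} A y := by
          by_cases hy : y ∈ {z : Euc N | 0 < Ψ l z}
          · rw [Set.indicator_of_mem hy]; exact hAy
          · rw [Set.indicator_of_notMem hy]
        by_cases hΨy : Ψ l y = 0
        · rw [hΨy, zero_mul, mul_zero, norm_zero]
          exact mul_nonneg hc₀ hind0
        · have hΨpos : 0 < Ψ l y := lt_of_le_of_ne (hΨnn y) (Ne.symm hΨy)
          have hβy : β l y ≠ 0 := by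
            intro hb0
            apply hΨy
            rw [hΨ]
            unfold fitness
            rw [hb0, zero_mul, zero_div]
          have hyT : y ∈ tsupport (β l) := subset_tsupport _ hβy
          have hdist : η₀ ≤ ‖x - y‖ := by
            have := hsep' x hx y hyT
            rwa [dist_eq_norm] at this
          have hzfar : η₀ / ε ≤ ‖ε⁻¹ • (x - y)‖ := by
            rw [norm_smul, norm_inv, Real.norm_eq_abs, abs_of_pos hεpos]
            rw [div_le_iff₀ hεpos, mul_comm ε⁻¹ _, mul_assoc, inv_mul_cancel₀ hεpos.ne',
              mul_one]
            exact hdist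
          have hm : |m (ε⁻¹ • (x - y))| ≤ max (S ε) 0 :=
            le_max_of_le_left (le_ciSup hbdd ⟨ε⁻¹ • (x - y), hzfar⟩)
          have hind : Set.indicator {z : Euc N | 0 < Ψ l z} A y = A y :=
            Set.indicator_of_mem (show y ∈ {z : Euc N | 0 < Ψ l z} from hΨpos) A
          rw [hind]
          have hεN : (0:ℝ) ≤ (ε ^ N)⁻¹ := by positivity
          calc ‖mScaled m ε (x - y) * (Ψ l y * A y)‖
              = (ε ^ N)⁻¹ * (|m (ε⁻¹ • (x - y))| * (Ψ l y * A y)) := by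
                unfold mScaled
                rw [Real.norm_eq_abs, abs_mul, abs_mul, abs_of_nonneg hεN,
                  abs_of_nonneg (mul_nonneg (hΨnn y) hAy), mul_assoc]
            _ ≤ (ε ^ N)⁻¹ * (max (S ε) 0 * (CΨ * A y)) := by
                refine mul_le_mul_of_nonneg_left ?_ hεN
                exact mul_le_mul hm (mul_le_mul_of_nonneg_right (hΨle y) hAy)
                  (mul_nonneg (hΨnn y) hAy) hS0
            _ = c₀ * A y := by rw [hc₀def]; ring
      calc ‖∫ y, mScaled m ε (x - y) * (Ψ l y * A y)‖
          ≤ ∫ y, c₀ * Set.indicator {z : Euc N | 0 < Ψ l z} A y :=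
            norm_integral_le_of_norm_le hg_int hbound
        _ = c₀ * IA := by
            rw [integral_const_mul, integral_indicator hΩopen.measurableSet]
    have hmono : eLpNorm (Set.indicator (tsupport (β k))
          (fun x => ∫ y, mScaled m ε (x - y) * (Ψ l y * A y)))
          (ENNReal.ofReal p) volume
        ≤ eLpNorm (Set.indicator (tsupport (β k)) (fun _ => c₀ * IA))
          (ENNReal.ofReal p) volume := by
      apply eLpNorm_mono
      intro x
      by_cases hx : x ∈ tsupport (β k)
      · rw [Set.indicator_of_mem hx, Set.indicator_of_mem hx, Real.norm_eq_abs (c₀ * IA)]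
        exact (hptwise x hx).trans (le_abs_self _)
      · simp [Set.indicator_of_notMem hx]
    refine hmono.trans ?_
    rw [eLpNorm_indicator_const (isClosed_tsupport _).measurableSet
      (by simp only [ne_eq, ENNReal.ofReal_eq_zero, not_le]; linarith)
      ENNReal.ofReal_ne_top]
    rw [ENNReal.toReal_ofReal (by linarith : (0:ℝ) ≤ p)]
    have h1' : ‖c₀ * IA‖ₑ = ENNReal.ofReal (c₀ * IA) := by
      rw [← ofReal_norm_eq_enorm, Real.norm_of_nonneg (mul_nonneg hc₀ hIA)]
    have h2' : volume (tsupport (β k)) ^ (1 / p) = ENNReal.ofReal V := by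
      rw [hVdef, ENNReal.ofReal_toReal hμsp, hμsdef]
    rw [h1', h2', ← ENNReal.ofReal_mul (mul_nonneg hc₀ hIA)]
    apply le_of_eq
    congr 1
    simp only [abs_of_pos hεpos]
    ring
end
end
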